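/- For neighboring runs F, F' with equal period p and equal Lyndon roots, there is at most one layer R of the pyramid P(F,F') that is not contained strictly inside F ∪ F' (i.e., at most one layer containing the first position of F or the last position of F'). -/

import Mathlib

open List

variable {α : Type*}

/-- `frag T a b` is the fragment `T[a..b]` (inclusive, 0-based). -/
def frag (T : List α) (a b : ℕ) : List α := (T.drop a).take (b + 1 - a)

/-- `p` is a period of `S`: `0 < p ≤ |S|` and `S[i] = S[i+p]` for all valid `i`. -/
def IsPeriodOf (p : ℕ) (S : List α) : Prop :=
  0 < p ∧ p ≤ S.length ∧ ∀ i : ℕ, i + p < S.length → S[i]? = S[i + p]?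

/-- The smallest period of `S`. -/
noncomputable def minPeriod (S : List α) : ℕ := sInf {p | IsPeriodOf p S}

/-- `T[a..b]` is a run: periodic (its smallest period occurs at least twice)
and maximal on both sides. -/
def IsRun (T : List α) (a b : ℕ) : Prop :=
  a ≤ b ∧ b < T.length ∧
  2 * minPeriod (frag T a b) ≤ b + 1 - a ∧
  (a = 0 ∨ T[a - 1]? ≠ T[a - 1 + minPeriod (frag T a b)]?) ∧
  (b = T.length - 1 ∨ T[b + 1]? ≠ T[b + 1 - minPeriod (frag T a b)]?)

/-- `W` occurs in `T` at position `s`. -/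
def OccursAt (T : List α) (s : ℕ) (W : List α) : Prop :=
  s + W.length ≤ T.length ∧ (T.drop s).take W.length = W

/-- The set of distinct square substrings of `T`. -/
def Squares (T : List α) : Set (List α) :=
  {W | ∃ X : List α, X ≠ [] ∧ W = X ++ X ∧ W <:+: T}

/-- A non-empty string is primitive if it is not a proper power. -/
def Primitive (U : List α) : Prop :=
  U ≠ [] ∧ ∀ (V : List α) (k : ℕ), U = (List.replicate k V).flatten → k = 1

/-- Cyclic rotation moving the first `c` characters to the end. -/
def rot (c : ℕ) (L : List α) : List α := L.drop c ++ L.take c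

/-- `lam` is the Lyndon root of a periodic string `S`: the lexicographically
smallest rotation of `S[0..per(S))`. -/
def LyndonRootOf [LinearOrder α] (S lam : List α) : Prop :=
  (∃ c < minPeriod S, lam = rot c (S.take (minPeriod S))) ∧
  ∀ c < minPeriod S, lam ≤ rot c (S.take (minPeriod S))

/-- Squares generated by a periodic string `U`: squares contained in `U`
whose smallest period equals that of `U`. -/
def FragSquares (U : List α) : Set (List α) :=
  {W | ∃ X : List α, X ≠ [] ∧ W = X ++ X ∧ W <:+: U ∧ minPeriod W = minPeriod U}

/-- `subper U`: the minimum of `per(X)` over squares `X²` generated by `U`. -/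
noncomputable def subper (U : List α) : ℕ :=
  sInf {q | ∃ X : List α, X ≠ [] ∧ (X ++ X) <:+: U ∧
    minPeriod (X ++ X) = minPeriod U ∧ minPeriod X = q}

/-- Fragments `[a..b]` and `[a'..b']` are neighboring:
`[a-1..b+1] ∩ [a'..b'] ≠ ∅`. -/
def Neighboring (a b a' b' : ℕ) : Prop := a ≤ b' + 1 ∧ a' ≤ b + 1

/-- `T[x..y]` is a layer of the pyramid of the neighboring runs
`F = T[a..b]` and `F' = T[a'..b']` (with `a < a'`): a subperiodic run `R`
with `subper(R) = per(F)` such that `R ∩ (F ∪ F')` is periodic with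
period `per(R)`. -/
def IsLayer (T : List α) (a b a' b' x y : ℕ) : Prop :=
  IsRun T x y ∧
  4 * subper (frag T x y) ≤ minPeriod (frag T x y) ∧
  subper (frag T x y) = minPeriod (frag T a b) ∧
  2 * minPeriod (frag T x y) ≤ min y b' + 1 - max x a ∧
  IsPeriodOf (minPeriod (frag T x y)) (frag T (max x a) (min y b'))

/-- periodicity of `T` with shift `r` on the inclusive window `[u, w]`. -/
def PerOn (T : List α) (u w r : ℕ) : Prop :=
  ∀ i : ℕ, u ≤ i → i + r ≤ w → T[i]? = T[i + r]?

lemma PerOn.mono {T : List α} {u w r u' w' : ℕ} (h : PerOn T u w r)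
    (hu : u ≤ u') (hw : w' ≤ w) : PerOn T u' w' r :=
  fun i hi hir => h i (hu.trans hi) (hir.trans hw)

lemma propagate {T : List α} {u w r s m g : ℕ}
    (big : PerOn T u w r) (win : PerOn T s m g)
    (hus : u ≤ s) (hmw : m ≤ w) (hr : 0 < r)
    (hlen : s + r + g ≤ m + 1) : PerOn T u w g := by
  have Hup : ∀ (n i : ℕ), u ≤ i → i + g ≤ m → s ≤ i + n →
      T[i]? = T[i + g]? := by
    intro n
    induction n with
    | zero => intro i hu' hg hs; exact win i (by omega) hg
    | succ n ih =>
      intro i hu' hg hs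
      by_cases hsi : s ≤ i
      · exact win i hsi hg
      · have e1 : T[i]? = T[i + r]? := big i hu' (by omega)
        have e2 : T[i + g]? = T[i + g + r]? := big (i + g) (by omega) (by omega)
        have e3 := ih (i + r) (by omega) (by omega) (by omega)
        have e4 : i + r + g = i + g + r := by omega
        rw [e4] at e3
        exact e1.trans (e3.trans e2.symm)
  have Hdown : ∀ (n i : ℕ), u ≤ i → i + g ≤ w → s ≤ i → i + g ≤ m + n →
      T[i]? = T[i + g]? := by
    intro n
    induction n with
    | zero => intro i hu' hg hs hm; exact win i hs (by omega)
    | succ n ih =>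
      intro i hu' hg hs hm
      by_cases him : i + g ≤ m
      · exact win i hs him
      · have hir : s + r ≤ i := by omega
        have e1 : T[i - r]? = T[i - r + r]? := big (i - r) (by omega) (by omega)
        have e2 : T[i - r + g]? = T[i - r + g + r]? := big (i - r + g) (by omega) (by omega)
        have e3 := ih (i - r) (by omega) (by omega) (by omega) (by omega)
        have e4 : i - r + r = i := by omega
        have e5 : i - r + g + r = i + g := by omega
        rw [e4] at e1
        rw [e5] at e2
        exact e1.symm.trans (e3.trans e2)
  intro i hu' hg
  by_cases hsi : s ≤ i
  · exact Hdown (i + g) i hu' hg hsi (by omega)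
  · exact Hup s i hu' (by omega) (by omega)

lemma finewilf {T : List α} : ∀ (N P Q u w : ℕ), P + Q ≤ N → 0 < P → 0 < Q →
    PerOn T u w P → PerOn T u w Q → u + P + Q ≤ w + 1 →
    PerOn T u w (Nat.gcd P Q) := by
  intro N
  induction N with
  | zero => intro P Q u w hN hP; omega
  | succ N ih =>
    intro P Q u w hN hP hQ hPP hPQ hlen
    rcases lt_trichotomy P Q with h | h | h
    · have hQP : PerOn T u (w - P) (Q - P) := by
        intro i hi hile
        have e1 : T[i]? = T[i + Q]? := hPQ i hi (by omega)
        have e2 : T[i + (Q - P)]? = T[i + (Q - P) + P]? :=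
          hPP (i + (Q - P)) (by omega) (by omega)
        have e3 : i + (Q - P) + P = i + Q := by omega
        rw [e3] at e2
        exact e1.trans e2.symm
      have hPP' : PerOn T u (w - P) P := hPP.mono le_rfl (by omega)
      have hg := ih P (Q - P) u (w - P) (by omega) hP (by omega) hPP' hQP (by omega)
      have egcd : Nat.gcd P (Q - P) = Nat.gcd P Q := by
        rw [Nat.gcd_sub_self_right h.le]
      rw [egcd] at hg
      have hgdvd : Nat.gcd P Q ∣ Q - P := egcd ▸ Nat.gcd_dvd_right P (Q - P)
      have hgle : Nat.gcd P Q ≤ Q - P := Nat.le_of_dvd (by omega) hgdvd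
      exact propagate hPP hg le_rfl (by omega) hP (by omega)
    · subst h
      rw [Nat.gcd_self]
      exact hPP
    · have hQP : PerOn T u (w - Q) (P - Q) := by
        intro i hi hile
        have e1 : T[i]? = T[i + P]? := hPP i hi (by omega)
        have e2 : T[i + (P - Q)]? = T[i + (P - Q) + Q]? :=
          hPQ (i + (P - Q)) (by omega) (by omega)
        have e3 : i + (P - Q) + Q = i + P := by omega
        rw [e3] at e2
        exact e1.trans e2.symm
      have hQQ' : PerOn T u (w - Q) Q := hPQ.mono le_rfl (by omega)
      have hg := ih Q (P - Q) u (w - Q) (by omega) hQ (by omega) hQQ' hQP (by omega)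
      have egcd : Nat.gcd Q (P - Q) = Nat.gcd Q P := by
        rw [Nat.gcd_sub_self_right h.le]
      rw [egcd, Nat.gcd_comm] at hg
      have hgdvd : Nat.gcd P Q ∣ P - Q := by
        have := Nat.gcd_dvd_right Q (P - Q)
        rwa [egcd, Nat.gcd_comm] at this
      have hgle : Nat.gcd P Q ≤ P - Q := Nat.le_of_dvd (by omega) hgdvd
      exact propagate hPQ hg le_rfl (by omega) hQ (by omega)

lemma frag_get? {T : List α} {u w j : ℕ} (hj : j < w + 1 - u) :
    (frag T u w)[j]? = T[u + j]? := by
  rw [frag, getElem?_take_of_lt hj, getElem?_drop]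

lemma frag_length {T : List α} {u w : ℕ} (hw : w < T.length) :
    (frag T u w).length = w + 1 - u := by
  simp [frag]
  omega

lemma isPeriodOf_iff_perOn {T : List α} {u w r : ℕ} (hu : u ≤ w) (hw : w < T.length) :
    IsPeriodOf r (frag T u w) ↔ (0 < r ∧ r ≤ w + 1 - u ∧ PerOn T u w r) := by
  unfold IsPeriodOf
  rw [frag_length hw]
  constructor
  · rintro ⟨h0, hle, h⟩
    refine ⟨h0, hle, ?_⟩
    intro i hi hir
    have h' := h (i - u) (by omega)
    rw [frag_get? (by omega), frag_get? (by omega)] at h'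
    have e1 : u + (i - u) = i := by omega
    have e2 : u + (i - u + r) = i + r := by omega
    rw [e1, e2] at h'
    exact h'
  · rintro ⟨h0, hle, h⟩
    refine ⟨h0, hle, ?_⟩
    intro i hi
    have h' := h (u + i) (by omega) (by omega)
    rw [frag_get? (by omega), frag_get? (by omega)]
    have e2 : u + (i + r) = u + i + r := by omega
    rw [e2]
    exact h'

lemma minPeriod_mem {S : List α} (h : S ≠ []) : IsPeriodOf (minPeriod S) S := by
  have : minPeriod S ∈ {p | IsPeriodOf p S} :=
    Nat.sInf_mem (⟨S.length, length_pos_iff.mpr h, le_rfl, fun i hi => absurd hi (by omega)⟩ :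
      Set.Nonempty {p | IsPeriodOf p S})
  exact this

lemma minPeriod_le' {S : List α} {r : ℕ} (h : IsPeriodOf r S) : minPeriod S ≤ r :=
  Nat.sInf_le h

lemma frag_ne_nil {T : List α} {u w : ℕ} (hu : u ≤ w) (hw : w < T.length) :
    frag T u w ≠ [] := by
  have := frag_length (T := T) (u := u) (w := w) hw
  intro hcon
  rw [hcon] at this
  simp at this
  omega

/-- Bundle of facts about the two neighboring runs. -/
structure PyrCtx (T : List α) (a b a' b' p : ℕ) : Prop where
  hab : a ≤ b
  hbn : b < T.length
  hA2p : 2 * p ≤ b + 1 - a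
  ha'b' : a' ≤ b'
  hb'n : b' < T.length
  hB2p : 2 * p ≤ b' + 1 - a'
  hp : 0 < p
  haa' : a < a'
  hnb : a' ≤ b + 1
  perF : PerOn T a b p
  perF' : PerOn T a' b' p
  minF : ∀ r, 0 < r → r ≤ b + 1 - a → PerOn T a b r → p ≤ r
  minF' : ∀ r, 0 < r → r ≤ b' + 1 - a' → PerOn T a' b' r → p ≤ r
  anchL' : T[a' - 1]? ≠ T[a' - 1 + p]?
  anchR : b = T.length - 1 ∨ T[b + 1]? ≠ T[b + 1 - p]?

/-- Bundle of facts about a single layer. -/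
structure LayFacts (T : List α) (a b a' b' p x y q : ℕ) : Prop where
  hxy : x ≤ y
  hyn : y < T.length
  hq0 : 0 < q
  h4p : 4 * p ≤ q
  hrun2q : 2 * q ≤ y + 1 - x
  perR : PerOn T x y q
  minR : ∀ r, 0 < r → r ≤ y + 1 - x → PerOn T x y r → q ≤ r
  perI : PerOn T (max x a) (min y b') q
  hI2q : 2 * q ≤ min y b' + 1 - max x a
  hmb : b + 1 ≤ min y b'
  hsa' : max x a + 1 ≤ a'
  hBp : a' ≤ max x a + q
  anchLx : x = 0 ∨ T[x - 1]? ≠ T[x - 1 + q]?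
  anchRy : y = T.length - 1 ∨ T[y + 1]? ≠ T[y + 1 - q]?

lemma build_ctx {T : List α} {a b a' b' p : ℕ}
    (hab : a < a') (h1 : IsRun T a b) (h2 : IsRun T a' b')
    (hnb : Neighboring a b a' b')
    (hp1 : minPeriod (frag T a b) = p) (hp2 : minPeriod (frag T a' b') = p) :
    PyrCtx T a b a' b' p := by
  obtain ⟨hab1, hbn, h2p, hL, hR⟩ := h1
  obtain ⟨hab1', hbn', h2p', hL', hR'⟩ := h2
  rw [hp1] at h2p hL hR
  rw [hp2] at h2p' hL' hR'
  have hFmem := minPeriod_mem (frag_ne_nil hab1 hbn)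
  rw [hp1] at hFmem
  have hF'mem := minPeriod_mem (frag_ne_nil hab1' hbn')
  rw [hp2] at hF'mem
  obtain ⟨hp0, -, perF⟩ := (isPeriodOf_iff_perOn hab1 hbn).mp hFmem
  obtain ⟨-, -, perF'⟩ := (isPeriodOf_iff_perOn hab1' hbn').mp hF'mem
  refine ⟨hab1, hbn, h2p, hab1', hbn', h2p', hp0, hab, hnb.2, perF, perF', ?_, ?_, ?_, hR⟩
  · intro r hr0 hrle hper
    have := minPeriod_le' ((isPeriodOf_iff_perOn hab1 hbn).mpr ⟨hr0, hrle, hper⟩)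
    omega
  · intro r hr0 hrle hper
    have := minPeriod_le' ((isPeriodOf_iff_perOn hab1' hbn').mpr ⟨hr0, hrle, hper⟩)
    omega
  · rcases hL' with h | h
    · omega
    · exact h

lemma build_lay {T : List α} {a b a' b' p x y : ℕ}
    (ctx : PyrCtx T a b a' b' p)
    (hp1 : minPeriod (frag T a b) = p)
    (hL : IsLayer T a b a' b' x y) :
    LayFacts T a b a' b' p x y (minPeriod (frag T x y)) := by
  obtain ⟨chab, chbn, chA2p, cha'b', chb'n, chB2p, chp, chaa', chnb,
    perF, perF', minF, minF', anchL', anchR⟩ := ctx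
  obtain ⟨hrun, h4, hsub, h2q, hper⟩ := hL
  set q := minPeriod (frag T x y) with hqdef
  obtain ⟨hxy, hyn, hrun2q, anchLx, anchRy⟩ := hrun
  rw [hp1] at hsub
  rw [hsub] at h4
  set s := max x a with hsdef
  set m := min y b' with hmdef
  have hq0 : 0 < q := hper.1
  have hmn : m < T.length := lt_of_le_of_lt (min_le_left _ _) hyn
  have hsm : s ≤ m := by
    have := hper.2.1
    rw [frag_length hmn] at this
    omega
  obtain ⟨-, hqle, perI⟩ := (isPeriodOf_iff_perOn hsm hmn).mp hper
  have hxs : x ≤ s := le_max_left _ _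
  have has : a ≤ s := le_max_right _ _
  have hmy : m ≤ y := min_le_left _ _
  have hmb' : m ≤ b' := min_le_right _ _
  have hRmem := minPeriod_mem (frag_ne_nil hxy hyn)
  obtain ⟨-, -, perR⟩ := (isPeriodOf_iff_perOn hxy hyn).mp hRmem
  have minR : ∀ r, 0 < r → r ≤ y + 1 - x → PerOn T x y r → q ≤ r := by
    intro r hr0 hrle hperr
    exact minPeriod_le' ((isPeriodOf_iff_perOn hxy hyn).mpr ⟨hr0, hrle, hperr⟩)
  -- P1 : the intersection window is not inside F
  have hmb : b + 1 ≤ m := by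
    by_contra hcon
    push_neg at hcon
    have hmle : m ≤ b := by omega
    have perIp : PerOn T s m p := perF.mono has hmle
    have hg := finewilf (p + q) p q s m le_rfl chp hq0 perIp perI (by omega)
    set g := Nat.gcd p q with hgdef
    have hg0 : 0 < g := Nat.gcd_pos_of_pos_left q chp
    have hgp : g ∣ p := Nat.gcd_dvd_left _ _
    have hgq : g ∣ q := Nat.gcd_dvd_right _ _
    have hglep : g ≤ p := Nat.le_of_dvd chp hgp
    have perabg : PerOn T a b g := propagate perF hg has hmle chp (by omega)
    have hpg : p ≤ g := minF g hg0 (by omega) perabg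
    have hgeq : g = p := le_antisymm hglep hpg
    rw [hgeq] at hg
    have perxyp : PerOn T x y p := propagate perR hg hxs hmy hq0 (by omega)
    have := minR p chp (by omega) perxyp
    omega
  -- P1' : the intersection window is not inside F'
  have hsa' : s + 1 ≤ a' := by
    by_contra hcon
    push_neg at hcon
    have ha's : a' ≤ s := by omega
    have perIp : PerOn T s m p := perF'.mono ha's hmb'
    have hg := finewilf (p + q) p q s m le_rfl chp hq0 perIp perI (by omega)
    set g := Nat.gcd p q with hgdef
    have hg0 : 0 < g := Nat.gcd_pos_of_pos_left q chp
    have hgp : g ∣ p := Nat.gcd_dvd_left _ _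
    have hglep : g ≤ p := Nat.le_of_dvd chp hgp
    have perabg : PerOn T a' b' g := propagate perF' hg ha's hmb' chp (by omega)
    have hpg : p ≤ g := minF' g hg0 (by omega) perabg
    have hgeq : g = p := le_antisymm hglep hpg
    rw [hgeq] at hg
    have perxyp : PerOn T x y p := propagate perR hg (le_trans hxs (by omega)) hmy hq0 (by omega)
    have := minR p chp (by omega) perxyp
    omega
  -- B' : a' ≤ s + q
  have hBp : a' ≤ s + q := by
    by_contra hcon
    push_neg at hcon
    have hcon' : s + q + 1 ≤ a' := by omega
    by_cases hbig : s + p + q ≤ a'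
    · -- long p-periodic prefix of the window inside F; propagate p everywhere
      have hwin : PerOn T s (a' - 1) p := perF.mono has (by omega)
      have persmp : PerOn T s m p := propagate perI hwin le_rfl (by omega) hq0 (by omega)
      have perxyp : PerOn T x y p := propagate perR persmp hxs hmy hq0 (by omega)
      have := minR p chp (by omega) perxyp
      omega
    · push_neg at hbig
      have e1 : T[a' - 1 - q]? = T[a' - 1 - q + q]? :=
        perI (a' - 1 - q) (by omega) (by omega)
      have e2 : T[a' - 1 - q]? = T[a' - 1 - q + p]? :=
        perF (a' - 1 - q) (by omega) (by omega)
      have e3 : T[a' - 1 - q + p]? = T[a' - 1 - q + p + q]? :=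
        perI (a' - 1 - q + p) (by omega) (by omega)
      have r1 : a' - 1 - q + q = a' - 1 := by omega
      have r2 : a' - 1 - q + p + q = a' - 1 + p := by omega
      rw [r1] at e1
      rw [r2] at e3
      exact anchL' ((e1.symm.trans e2).trans e3)
  exact ⟨hxy, hyn, hq0, h4, hrun2q, perR, minR, perI, h2q, hmb, hsa', hBp, anchLx, anchRy⟩


lemma left_facts {T : List α} {a b a' b' p x y q : ℕ}
    (ctx : PyrCtx T a b a' b' p) (lf : LayFacts T a b a' b' p x y q) (hxa : x ≤ a) :
    min y b' ≤ b + q ∧ a + q ≤ b + 1 ∧ b + 2 ≤ a + q + p ∧ a' ≤ a + q := by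
  obtain ⟨chab, chbn, chA2p, cha'b', chb'n, chB2p, chp, chaa', chnb,
    perF, perF', minF, minF', anchL', anchR⟩ := ctx
  obtain ⟨hxy, hyn, hq0, h4p, hrun2q, perR, minR, perI, hI2q, hmb, hsa', hBp, anchLx, anchRy⟩ := lf
  have hs : max x a = a := max_eq_right hxa
  rw [hs] at perI hI2q hsa' hBp
  have hmy : min y b' ≤ y := min_le_left _ _
  have hmbb' : min y b' ≤ b' := min_le_right _ _
  have anchRs : T[b + 1]? ≠ T[b + 1 - p]? := by
    rcases anchR with h | h
    · omega
    · exact h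
  have l1 : min y b' ≤ b + q := by
    by_contra hcon
    push_neg at hcon
    have e1 : T[b + 1]? = T[b + 1 + q]? := perI (b + 1) (by omega) (by omega)
    have e2 : T[b + 1 - p]? = T[b + 1 - p + q]? := perI (b + 1 - p) (by omega) (by omega)
    have e3 : T[b + 1 - p + q]? = T[b + 1 - p + q + p]? :=
      perF' (b + 1 - p + q) (by omega) (by omega)
    have r3 : b + 1 - p + q + p = b + 1 + q := by omega
    rw [r3] at e3
    exact anchRs (e1.trans ((e3.symm.trans e2.symm)))
  have l2 : a + q ≤ b + 1 := by omega
  have l3 : b + 2 ≤ a + q + p := by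
    by_contra hcon
    push_neg at hcon
    have e1 : T[b + 1 - q]? = T[b + 1 - q + q]? := perI (b + 1 - q) (by omega) (by omega)
    have e2 : T[b + 1 - p - q]? = T[b + 1 - p - q + q]? :=
      perI (b + 1 - p - q) (by omega) (by omega)
    have e3 : T[b + 1 - p - q]? = T[b + 1 - p - q + p]? :=
      perF (b + 1 - p - q) (by omega) (by omega)
    have r1 : b + 1 - q + q = b + 1 := by omega
    have r2 : b + 1 - p - q + q = b + 1 - p := by omega
    have r3 : b + 1 - p - q + p = b + 1 - q := by omega
    rw [r1] at e1
    rw [r2] at e2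
    rw [r3] at e3
    exact anchRs ((e1.symm.trans e3.symm).trans e2)
  exact ⟨l1, l2, l3, hBp⟩

lemma right_facts {T : List α} {a b a' b' p x y q : ℕ}
    (ctx : PyrCtx T a b a' b' p) (lf : LayFacts T a b a' b' p x y q) (hyb : b' ≤ y) :
    a' + q ≤ b' + 1 ∧ b' + 2 ≤ a' + q + p := by
  obtain ⟨chab, chbn, chA2p, cha'b', chb'n, chB2p, chp, chaa', chnb,
    perF, perF', minF, minF', anchL', anchR⟩ := ctx
  obtain ⟨hxy, hyn, hq0, h4p, hrun2q, perR, minR, perI, hI2q, hmb, hsa', hBp, anchLx, anchRy⟩ := lf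
  have hm : min y b' = b' := min_eq_right hyb
  rw [hm] at perI hI2q hmb
  have r1 : a' + q ≤ b' + 1 := by omega
  refine ⟨r1, ?_⟩
  by_contra hcon
  push_neg at hcon
  have e1 : T[a' - 1]? = T[a' - 1 + q]? := perI (a' - 1) (by omega) (by omega)
  have e2 : T[a' - 1 + p]? = T[a' - 1 + p + q]? := perI (a' - 1 + p) (by omega) (by omega)
  have e3 : T[a' - 1 + q]? = T[a' - 1 + q + p]? := perF' (a' - 1 + q) (by omega) (by omega)
  have r : a' - 1 + p + q = a' - 1 + q + p := by omega
  rw [r] at e2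
  exact anchL' ((e1.trans e3).trans e2.symm)

lemma core_LL {T : List α} {a b a' b' p x y q x₁ y₁ q₁ : ℕ}
    (ctx : PyrCtx T a b a' b' p)
    (lf : LayFacts T a b a' b' p x y q) (lf₁ : LayFacts T a b a' b' p x₁ y₁ q₁)
    (hxa : x ≤ a) (hxa₁ : x₁ ≤ a) (hlt : q < q₁) : False := by
  obtain ⟨l1, l2, l3, l4⟩ := left_facts ctx lf hxa
  obtain ⟨l1', l2', l3', l4'⟩ := left_facts ctx lf₁ hxa₁
  obtain ⟨chab, chbn, chA2p, cha'b', chb'n, chB2p, chp, chaa', chnb,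
    perF, perF', minF, minF', anchL', anchR⟩ := ctx
  obtain ⟨hxy, hyn, hq0, h4p, hrun2q, perR, minR, perI, hI2q, hmb, hsa', hBp, anchLx, anchRy⟩ := lf
  obtain ⟨hxy1, hyn1, hq01, h4p1, hrun2q1, perR1, minR1, perI1, hI2q1, hmb1, hsa'1, hBp1, anchLx1, anchRy1⟩ := lf₁
  rw [max_eq_right hxa] at perI hI2q
  rw [max_eq_right hxa₁] at perI1 hI2q1
  have hmy : min y b' ≤ y := min_le_left _ _
  have hmy1 : min y₁ b' ≤ y₁ := min_le_left _ _
  have hdle : q₁ - q ≤ p - 1 := by omega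
  have win : PerOn T a (a + q - 1) (q₁ - q) := by
    intro j hj hjd
    have eA : T[j]? = T[j + q₁]? := perI1 j (by omega) (by omega)
    have eB : T[j + (q₁ - q)]? = T[j + (q₁ - q) + q]? :=
      perI (j + (q₁ - q)) (by omega) (by omega)
    have r : j + (q₁ - q) + q = j + q₁ := by omega
    rw [r] at eB
    exact eA.trans eB.symm
  have pwin : PerOn T a (a + q - 1) p := perF.mono le_rfl (by omega)
  have hfw := finewilf ((q₁ - q) + p) (q₁ - q) p a (a + q - 1) le_rfl (by omega) chp win pwin
    (by omega)
  have hgled : Nat.gcd (q₁ - q) p ≤ q₁ - q := Nat.le_of_dvd (by omega) (Nat.gcd_dvd_left _ _)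
  have hg0 : 0 < Nat.gcd (q₁ - q) p := Nat.gcd_pos_of_pos_right _ chp
  have hperab : PerOn T a b (Nat.gcd (q₁ - q) p) := propagate perF hfw le_rfl (by omega) chp
    (by omega)
  have := minF _ hg0 (by omega) hperab
  omega

lemma core_RR {T : List α} {a b a' b' p x y q x₁ y₁ q₁ : ℕ}
    (ctx : PyrCtx T a b a' b' p)
    (lf : LayFacts T a b a' b' p x y q) (lf₁ : LayFacts T a b a' b' p x₁ y₁ q₁)
    (hyb : b' ≤ y) (hyb₁ : b' ≤ y₁) (hlt : q < q₁) : False := by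
  obtain ⟨r1, r2⟩ := right_facts ctx lf hyb
  obtain ⟨r1', r2'⟩ := right_facts ctx lf₁ hyb₁
  obtain ⟨chab, chbn, chA2p, cha'b', chb'n, chB2p, chp, chaa', chnb,
    perF, perF', minF, minF', anchL', anchR⟩ := ctx
  obtain ⟨hxy, hyn, hq0, h4p, hrun2q, perR, minR, perI, hI2q, hmb, hsa', hBp, anchLx, anchRy⟩ := lf
  obtain ⟨hxy1, hyn1, hq01, h4p1, hrun2q1, perR1, minR1, perI1, hI2q1, hmb1, hsa'1, hBp1, anchLx1, anchRy1⟩ := lf₁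
  rw [min_eq_right hyb] at perI hI2q hmb
  rw [min_eq_right hyb₁] at perI1 hI2q1 hmb1
  have hax : a ≤ max x a := le_max_right _ _
  have hax1 : a ≤ max x₁ a := le_max_right _ _
  have hdle : q₁ - q ≤ p - 1 := by omega
  have win : PerOn T (b' + 1 - q) b' (q₁ - q) := by
    intro j hj hjd
    have eA : T[j - q]? = T[j - q + q]? := perI (j - q) (by omega) (by omega)
    have eB : T[j - q]? = T[j - q + q₁]? := perI1 (j - q) (by omega) (by omega)
    have ra : j - q + q = j := by omega
    have rb : j - q + q₁ = j + (q₁ - q) := by omega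
    rw [ra] at eA
    rw [rb] at eB
    exact eA.symm.trans eB
  have pwin : PerOn T (b' + 1 - q) b' p := perF'.mono (by omega) le_rfl
  have hfw := finewilf ((q₁ - q) + p) (q₁ - q) p (b' + 1 - q) b' le_rfl (by omega) chp win pwin
    (by omega)
  have hgled : Nat.gcd (q₁ - q) p ≤ q₁ - q := Nat.le_of_dvd (by omega) (Nat.gcd_dvd_left _ _)
  have hg0 : 0 < Nat.gcd (q₁ - q) p := Nat.gcd_pos_of_pos_right _ chp
  have hperab : PerOn T a' b' (Nat.gcd (q₁ - q) p) := propagate perF' hfw (by omega) le_rfl chp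
    (by omega)
  have := minF' _ hg0 (by omega) hperab
  omega

lemma core_LR_lt {T : List α} {a b a' b' p x y q x₁ y₁ q₁ : ℕ}
    (ctx : PyrCtx T a b a' b' p)
    (lf : LayFacts T a b a' b' p x y q) (lf₁ : LayFacts T a b a' b' p x₁ y₁ q₁)
    (hxa : x ≤ a) (hyb₁ : b' ≤ y₁) (hlt : q < q₁) : False := by
  obtain ⟨l1, l2, l3, l4⟩ := left_facts ctx lf hxa
  obtain ⟨r1', r2'⟩ := right_facts ctx lf₁ hyb₁
  obtain ⟨chab, chbn, chA2p, cha'b', chb'n, chB2p, chp, chaa', chnb,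
    perF, perF', minF, minF', anchL', anchR⟩ := ctx
  obtain ⟨hxy, hyn, hq0, h4p, hrun2q, perR, minR, perI, hI2q, hmb, hsa', hBp, anchLx, anchRy⟩ := lf
  obtain ⟨hxy1, hyn1, hq01, h4p1, hrun2q1, perR1, minR1, perI1, hI2q1, hmb1, hsa'1, hBp1, anchLx1, anchRy1⟩ := lf₁
  rw [max_eq_right hxa] at perI hI2q
  rw [min_eq_right hyb₁] at perI1 hI2q1 hmb1
  have hax1 : a ≤ max x₁ a := le_max_right _ _
  have hmyb' : min y b' ≤ b' := min_le_right _ _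
  have hdle : q₁ - q ≤ p - 1 := by omega
  have win : PerOn T (max x₁ a) (min y b' - q) (q₁ - q) := by
    intro j hj hjd
    have eA : T[j]? = T[j + q₁]? := perI1 j (by omega) (by omega)
    have eB : T[j + (q₁ - q)]? = T[j + (q₁ - q) + q]? :=
      perI (j + (q₁ - q)) (by omega) (by omega)
    have r : j + (q₁ - q) + q = j + q₁ := by omega
    rw [r] at eB
    exact eA.trans eB.symm
  have pwin : PerOn T (max x₁ a) (min y b' - q) p := perF.mono (by omega) (by omega)
  have hfw := finewilf ((q₁ - q) + p) (q₁ - q) p (max x₁ a) (min y b' - q) le_rfl (by omega)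
    chp win pwin (by omega)
  have hgled : Nat.gcd (q₁ - q) p ≤ q₁ - q := Nat.le_of_dvd (by omega) (Nat.gcd_dvd_left _ _)
  have hg0 : 0 < Nat.gcd (q₁ - q) p := Nat.gcd_pos_of_pos_right _ chp
  have hperab : PerOn T a b (Nat.gcd (q₁ - q) p) := propagate perF hfw (by omega) (by omega) chp
    (by omega)
  have := minF _ hg0 (by omega) hperab
  omega

lemma core_LR_gt {T : List α} {a b a' b' p x y q x₁ y₁ q₁ : ℕ}
    (ctx : PyrCtx T a b a' b' p)
    (lf : LayFacts T a b a' b' p x y q) (lf₁ : LayFacts T a b a' b' p x₁ y₁ q₁)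
    (hxa : x ≤ a) (hyb₁ : b' ≤ y₁) (hlt : q₁ < q) : False := by
  obtain ⟨l1, l2, l3, l4⟩ := left_facts ctx lf hxa
  obtain ⟨r1', r2'⟩ := right_facts ctx lf₁ hyb₁
  obtain ⟨chab, chbn, chA2p, cha'b', chb'n, chB2p, chp, chaa', chnb,
    perF, perF', minF, minF', anchL', anchR⟩ := ctx
  obtain ⟨hxy, hyn, hq0, h4p, hrun2q, perR, minR, perI, hI2q, hmb, hsa', hBp, anchLx, anchRy⟩ := lf
  obtain ⟨hxy1, hyn1, hq01, h4p1, hrun2q1, perR1, minR1, perI1, hI2q1, hmb1, hsa'1, hBp1, anchLx1, anchRy1⟩ := lf₁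
  rw [max_eq_right hxa] at perI hI2q
  rw [min_eq_right hyb₁] at perI1 hI2q1 hmb1
  have hax1 : a ≤ max x₁ a := le_max_right _ _
  have hmyb' : min y b' ≤ b' := min_le_right _ _
  have hmyy : min y b' ≤ y := min_le_left _ _
  have anchRs : T[b + 1]? ≠ T[b + 1 - p]? := by
    rcases anchR with h | h
    · omega
    · exact h
  have hdle : q - q₁ ≤ 2 * p - 2 := by omega
  have win : PerOn T (max x₁ a + q₁) (min y b') (q - q₁) := by
    intro j hj hjd
    have eA : T[j - q₁]? = T[j - q₁ + q]? := perI (j - q₁) (by omega) (by omega)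
    have eB : T[j - q₁]? = T[j - q₁ + q₁]? := perI1 (j - q₁) (by omega) (by omega)
    have ra : j - q₁ + q₁ = j := by omega
    have rb : j - q₁ + q = j + (q - q₁) := by omega
    rw [ra] at eB
    rw [rb] at eA
    exact eB.symm.trans eA
  have pwin : PerOn T (max x₁ a + q₁) (min y b') p := perF'.mono (by omega) (by omega)
  have hfw := finewilf ((q - q₁) + p) (q - q₁) p (max x₁ a + q₁) (min y b') le_rfl (by omega)
    chp win pwin (by omega)
  have hgled : Nat.gcd (q - q₁) p ≤ q - q₁ := Nat.le_of_dvd (by omega) (Nat.gcd_dvd_left _ _)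
  have hglep : Nat.gcd (q - q₁) p ≤ p := Nat.le_of_dvd chp (Nat.gcd_dvd_right _ _)
  have hg0 : 0 < Nat.gcd (q - q₁) p := Nat.gcd_pos_of_pos_right _ chp
  have hperab : PerOn T a' b' (Nat.gcd (q - q₁) p) := propagate perF' hfw (by omega) (by omega)
    chp (by omega)
  have hple := minF' _ hg0 (by omega) hperab
  have hgeq : Nat.gcd (q - q₁) p = p := le_antisymm hglep hple
  have hpdvd : p ∣ q - q₁ := by
    have := Nat.gcd_dvd_left (q - q₁) p
    rwa [hgeq] at this
  have hdp : q - q₁ = p := by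
    obtain ⟨c, hc⟩ := hpdvd
    rcases Nat.lt_or_ge c 2 with h2 | h2
    · interval_cases c
      · simp at hc
        omega
      · simpa using hc
    · exfalso
      have : p * 2 ≤ p * c := Nat.mul_le_mul_left p h2
      omega
  -- now q = q₁ + p ; derive the final contradiction at the junction b+1
  have eA : T[b + 1 - p]? = T[b + 1 - p + q]? := perI (b + 1 - p) (by omega) (by omega)
  have eB : T[b + 1]? = T[b + 1 + q₁]? := perI1 (b + 1) (by omega) (by omega)
  have r : b + 1 + q₁ = b + 1 - p + q := by omega
  rw [r] at eB
  exact anchRs (eB.trans eA.symm)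

lemma run_eq {T : List α} {x y x₁ y₁ q : ℕ}
    (perR : PerOn T x y q) (perR₁ : PerOn T x₁ y₁ q)
    (aL : x = 0 ∨ T[x - 1]? ≠ T[x - 1 + q]?)
    (aL₁ : x₁ = 0 ∨ T[x₁ - 1]? ≠ T[x₁ - 1 + q]?)
    (aR : y = T.length - 1 ∨ T[y + 1]? ≠ T[y + 1 - q]?)
    (aR₁ : y₁ = T.length - 1 ∨ T[y₁ + 1]? ≠ T[y₁ + 1 - q]?)
    (h1 : x₁ + q ≤ y + 1) (h2 : x + q ≤ y₁ + 1)
    (hq : 0 < q) (hyn : y < T.length) (hy₁n : y₁ < T.length) :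
    x = x₁ ∧ y = y₁ := by
  constructor
  · rcases lt_trichotomy x x₁ with h | h | h
    · exfalso
      have e := perR (x₁ - 1) (by omega) (by omega)
      rcases aL₁ with h0 | hne
      · omega
      · exact hne e
    · exact h
    · exfalso
      have e := perR₁ (x - 1) (by omega) (by omega)
      rcases aL with h0 | hne
      · omega
      · exact hne e
  · rcases lt_trichotomy y y₁ with h | h | h
    · exfalso
      have e := perR₁ (y + 1 - q) (by omega) (by omega)
      have r : y + 1 - q + q = y + 1 := by omega
      rw [r] at e
      rcases aR with h0 | hne
      · omega
      · exact hne e.symm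
    · exact h
    · exfalso
      have e := perR (y₁ + 1 - q) (by omega) (by omega)
      have r : y₁ + 1 - q + q = y₁ + 1 := by omega
      rw [r] at e
      rcases aR₁ with h0 | hne
      · omega
      · exact hne e.symm

lemma final_LL {T : List α} {a b a' b' p x y q x₁ y₁ q₁ : ℕ}
    (ctx : PyrCtx T a b a' b' p)
    (lf : LayFacts T a b a' b' p x y q) (lf₁ : LayFacts T a b a' b' p x₁ y₁ q₁)
    (hxa : x ≤ a) (hxa₁ : x₁ ≤ a) : x = x₁ ∧ y = y₁ := by
  have hqq : q = q₁ := by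
    rcases lt_trichotomy q q₁ with h | h | h
    · exact (core_LL ctx lf lf₁ hxa hxa₁ h).elim
    · exact h
    · exact (core_LL ctx lf₁ lf hxa₁ hxa h).elim
  subst hqq
  have hi := lf.hI2q
  have hi₁ := lf₁.hI2q
  have e1 : min y b' ≤ y := min_le_left _ _
  have e2 : min y₁ b' ≤ y₁ := min_le_left _ _
  have e3 : a ≤ max x a := le_max_right _ _
  have e4 : a ≤ max x₁ a := le_max_right _ _
  have hq0 := lf.hq0
  exact run_eq lf.perR lf₁.perR lf.anchLx lf₁.anchLx lf.anchRy lf₁.anchRy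
    (by omega) (by omega) hq0 lf.hyn lf₁.hyn

lemma final_RR {T : List α} {a b a' b' p x y q x₁ y₁ q₁ : ℕ}
    (ctx : PyrCtx T a b a' b' p)
    (lf : LayFacts T a b a' b' p x y q) (lf₁ : LayFacts T a b a' b' p x₁ y₁ q₁)
    (hyb : b' ≤ y) (hyb₁ : b' ≤ y₁) : x = x₁ ∧ y = y₁ := by
  have hqq : q = q₁ := by
    rcases lt_trichotomy q q₁ with h | h | h
    · exact (core_RR ctx lf lf₁ hyb hyb₁ h).elim
    · exact h
    · exact (core_RR ctx lf₁ lf hyb₁ hyb h).elim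
  subst hqq
  have hi := lf.hI2q
  have hi₁ := lf₁.hI2q
  have e1 : min y b' = b' := min_eq_right hyb
  have e2 : min y₁ b' = b' := min_eq_right hyb₁
  have e3 : x ≤ max x a := le_max_left _ _
  have e4 : x₁ ≤ max x₁ a := le_max_left _ _
  have hq0 := lf.hq0
  exact run_eq lf.perR lf₁.perR lf.anchLx lf₁.anchLx lf.anchRy lf₁.anchRy
    (by omega) (by omega) hq0 lf.hyn lf₁.hyn

lemma final_LR {T : List α} {a b a' b' p x y q x₁ y₁ q₁ : ℕ}
    (ctx : PyrCtx T a b a' b' p)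
    (lf : LayFacts T a b a' b' p x y q) (lf₁ : LayFacts T a b a' b' p x₁ y₁ q₁)
    (hxa : x ≤ a) (hyb₁ : b' ≤ y₁) : x = x₁ ∧ y = y₁ := by
  obtain ⟨l1, l2, l3, l4⟩ := left_facts ctx lf hxa
  obtain ⟨r1', r2'⟩ := right_facts ctx lf₁ hyb₁
  have hqq : q = q₁ := by
    rcases lt_trichotomy q q₁ with h | h | h
    · exact (core_LR_lt ctx lf lf₁ hxa hyb₁ h).elim
    · exact h
    · exact (core_LR_gt ctx lf lf₁ hxa hyb₁ h).elim
  subst hqq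
  have hi := lf.hI2q
  have hi₁ := lf₁.hI2q
  have e1 : min y b' ≤ y := min_le_left _ _
  have e2 : min y₁ b' = b' := min_eq_right hyb₁
  have e3 : max x a = a := max_eq_right hxa
  have e4 : x₁ ≤ max x₁ a := le_max_left _ _
  have e5 : min y b' ≤ b' := min_le_right _ _
  have hq0 := lf.hq0
  have h4p := lf.h4p
  have hp0 := ctx.hp
  exact run_eq lf.perR lf₁.perR lf.anchLx lf₁.anchLx lf.anchRy lf₁.anchRy
    (by omega) (by omega) hq0 lf.hyn lf₁.hyn

/-- A `τ`-synchronizing set of `T` (Kempa–Kociumaka): consistency and density. -/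
def SyncSet (T : List α) (τ : ℕ) (S : Set ℕ) : Prop :=
  (∀ i ∈ S, i + 2 * τ ≤ T.length) ∧
  (∀ i j : ℕ, i + 2 * τ ≤ T.length → j + 2 * τ ≤ T.length →
    (T.drop i).take (2 * τ) = (T.drop j).take (2 * τ) → (i ∈ S ↔ j ∈ S)) ∧
  (∀ i : ℕ, i + 3 * τ - 1 ≤ T.length →
    ((∀ k ∈ S, k < i ∨ i + τ ≤ k) ↔
      3 * minPeriod ((T.drop i).take (3 * τ - 1)) ≤ τ))

/-- At most one layer of a pyramid is not strictly inside `F ∪ F'`. -/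
theorem at_most_one_nonregular_layer [LinearOrder α] (T : List α)
    (a b a' b' p : ℕ) (lam : List α)
    (hab : a < a')
    (h1 : IsRun T a b) (h2 : IsRun T a' b')
    (hnb : Neighboring a b a' b')
    (hp1 : minPeriod (frag T a b) = p) (hp2 : minPeriod (frag T a' b') = p)
    (hlam1 : LyndonRootOf (frag T a b) lam)
    (hlam2 : LyndonRootOf (frag T a' b') lam) :
    ∀ x y x₁ y₁ : ℕ, IsLayer T a b a' b' x y → IsLayer T a b a' b' x₁ y₁ →
      ¬(a < x ∧ y < b') → ¬(a < x₁ ∧ y₁ < b') → x = x₁ ∧ y = y₁ := by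
  intro x y x₁ y₁ hLay hLay₁ hbad hbad₁
  have ctx := build_ctx hab h1 h2 hnb hp1 hp2
  have lf := build_lay ctx hp1 hLay
  have lf₁ := build_lay ctx hp1 hLay₁
  have hbadA : x ≤ a ∨ b' ≤ y := by
    by_contra hc
    push_neg at hc
    exact hbad ⟨by omega, by omega⟩
  have hbadB : x₁ ≤ a ∨ b' ≤ y₁ := by
    by_contra hc
    push_neg at hc
    exact hbad₁ ⟨by omega, by omega⟩
  rcases hbadA with hA | hA <;> rcases hbadB with hB | hB
  · exact final_LL ctx lf lf₁ hA hB
  · exact final_LR ctx lf lf₁ hA hB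
  · obtain ⟨e1, e2⟩ := final_LR ctx lf₁ lf hB hA
    exact ⟨e1.symm, e2.symm⟩
  · exact final_RR ctx lf lf₁ hA hB
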